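/- Let ξ(z), z ∈ ℤ^d, be i.i.d. Pareto(α) random variables (P(ξ(z) ≤ r) = 1 − r^{−α} for r ≥ 1) with α > d. For any A > 0, c > 0 and ε ∈ (0,1) there exists R > 0 such that for all r ≥ 1, P( max over x ∈ ℤ^d with x ∉ [−Rr,Rr]^d of ( ξ(x)/r^{d/α} − c|x|/r ) ≤ −A ) ≥ 1 − ε. -/

import Mathlib

open MeasureTheory ProbabilityTheory

open Finset
open scoped ENNReal

namespace Stmt8Aux

lemma bern_div {p w : ℝ} (hp : 0 < p) (hw : 0 < w) :
    1 + p * ((w - 1) / w) ≤ w ^ p := by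
  have h := one_add_mul_self_le_rpow_one_add (s := w - 1) (by linarith) (p := 1 + p) (by linarith)
  rw [show (1:ℝ) + (w - 1) = w by ring] at h
  rw [Real.rpow_add hw, Real.rpow_one] at h
  have h2 : 1 + p * ((w - 1) / w) = (1 + (1 + p) * (w - 1)) / w := by
    field_simp; ring
  rw [h2, div_le_iff₀ hw]
  linarith [h]

/-- lower bound for one-step difference of `a ^ (-q)` -/
lemma rpow_step_lower {q a : ℝ} (hq : 0 < q) (ha : 1 ≤ a) :
    q * (a + 1) ^ (-(q + 1)) ≤ a ^ (-q) - (a + 1) ^ (-q) := by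
  have ha0 : (0:ℝ) < a := lt_of_lt_of_le one_pos ha
  have hb0 : (0:ℝ) < a + 1 := by linarith
  have hu0 : (0:ℝ) < (a + 1) / a := div_pos hb0 ha0
  have h := bern_div hq hu0
  -- (w-1)/w = 1/(a+1)
  have hw1 : ((a + 1) / a - 1) / ((a + 1) / a) = 1 / (a + 1) := by
    field_simp
    ring
  rw [hw1] at h
  -- multiply by (a+1)^(-q)
  have hbq : (0:ℝ) < (a + 1) ^ (-q) := Real.rpow_pos_of_pos hb0 _
  have h3 : ((a + 1) / a) ^ q * (a + 1) ^ (-q) = a ^ (-q) := by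
    rw [Real.div_rpow hb0.le ha0.le, Real.rpow_neg hb0.le, Real.rpow_neg ha0.le]
    field_simp
  have h4 : (1 + q * (1 / (a + 1))) * (a + 1) ^ (-q)
      = (a + 1) ^ (-q) + q * (a + 1) ^ (-(q + 1)) := by
    have : (a + 1) ^ (-(q + 1)) = (a + 1) ^ (-q) * (a + 1)⁻¹ := by
      rw [show -(q+1) = -q + (-1) by ring, Real.rpow_add hb0, Real.rpow_neg_one]
    rw [this]; field_simp
  nlinarith [mul_le_mul_of_nonneg_right h hbq.le]

/-- upper bound for one-step difference of `a ^ (-p)` -/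
lemma rpow_step_upper {p a : ℝ} (hp : 0 < p) (ha : 1 ≤ a) :
    a ^ (-p) - (a + 1) ^ (-p) ≤ p * a ^ (-(p + 1)) := by
  have ha0 : (0:ℝ) < a := lt_of_lt_of_le one_pos ha
  have hb0 : (0:ℝ) < a + 1 := by linarith
  have hw0 : (0:ℝ) < a / (a + 1) := div_pos ha0 hb0
  have h := bern_div hp hw0
  have hw1 : (a / (a + 1) - 1) / (a / (a + 1)) = -(1 / a) := by
    field_simp; ring
  rw [hw1] at h
  have haq : (0:ℝ) < a ^ (-p) := Real.rpow_pos_of_pos ha0 _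
  have h3 : (a / (a + 1)) ^ p * a ^ (-p) = (a + 1) ^ (-p) := by
    rw [Real.div_rpow ha0.le hb0.le, Real.rpow_neg hb0.le, Real.rpow_neg ha0.le]
    field_simp
  have h4 : (1 + p * -(1 / a)) * a ^ (-p) = a ^ (-p) - p * a ^ (-(p + 1)) := by
    have : a ^ (-(p + 1)) = a ^ (-p) * a⁻¹ := by
      rw [show -(p+1) = -p + (-1) by ring, Real.rpow_add ha0, Real.rpow_neg_one]
    rw [this]; field_simp; ring
  nlinarith [mul_le_mul_of_nonneg_right h haq.le]


lemma tele_hasSum {p : ℝ} (hp : 0 < p) (m : ℕ) (hm : 1 ≤ m) :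
    HasSum (fun k : ℕ => ((m + k : ℕ) : ℝ) ^ (-p) - (((m + k : ℕ) : ℝ) + 1) ^ (-p))
      ((m : ℝ) ^ (-p)) := by
  have hnn : ∀ k : ℕ, 0 ≤ ((m + k : ℕ) : ℝ) ^ (-p) - (((m + k : ℕ) : ℝ) + 1) ^ (-p) := by
    intro k
    have h0 : (0:ℝ) < ((m + k : ℕ) : ℝ) := by
      have : 1 ≤ m + k := le_add_right hm
      exact_mod_cast Nat.lt_of_lt_of_le Nat.zero_lt_one this
    have := Real.rpow_le_rpow_of_nonpos h0 (by linarith : ((m + k : ℕ):ℝ) ≤ ((m + k : ℕ):ℝ) + 1)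
      (by linarith : -p ≤ 0)
    linarith
  rw [hasSum_iff_tendsto_nat_of_nonneg hnn]
  have hsum : ∀ n : ℕ,
      (∑ i ∈ Finset.range n, (((m + i : ℕ) : ℝ) ^ (-p) - (((m + i : ℕ) : ℝ) + 1) ^ (-p)))
        = (m : ℝ) ^ (-p) - ((m + n : ℕ) : ℝ) ^ (-p) := by
    intro n
    have h2 : ∀ i : ℕ, (((m + i : ℕ) : ℝ) + 1) ^ (-p) = ((m + (i+1) : ℕ) : ℝ) ^ (-p) := by
      intro i; congr 1; push_cast; ring
    simp only [h2]
    rw [Finset.sum_range_sub' (f := fun j : ℕ => ((m + j : ℕ) : ℝ) ^ (-p)) n]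
    norm_num
  simp only [hsum]
  have h1 : Filter.Tendsto (fun n : ℕ => ((m + n : ℕ) : ℝ) ^ (-p)) Filter.atTop (nhds 0) := by
    apply (tendsto_rpow_neg_atTop hp).comp
    apply Filter.tendsto_atTop_mono (fun n : ℕ => by exact_mod_cast Nat.le_add_left n m : ∀ n : ℕ, (n:ℝ) ≤ ((m + n : ℕ):ℝ))
    exact tendsto_natCast_atTop_atTop
  have := Filter.Tendsto.const_sub ((m : ℝ) ^ (-p)) h1
  simpa using this

lemma tele_tsum {p : ℝ} (hp : 0 < p) (m : ℕ) (hm : 1 ≤ m) :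
    (∑' n : ℕ, (if m ≤ n then ENNReal.ofReal ((n:ℝ) ^ (-p) - ((n:ℝ) + 1) ^ (-p)) else 0))
      = ENNReal.ofReal ((m : ℝ) ^ (-p)) := by
  set g : ℕ → ℝ≥0∞ := fun n => if m ≤ n then ENNReal.ofReal ((n:ℝ) ^ (-p) - ((n:ℝ) + 1) ^ (-p)) else 0 with hg
  have hinj : Function.Injective (fun k : ℕ => m + k) := fun a b h => by
    simpa using h
  have hzero : Function.support g ⊆ Set.range (fun k : ℕ => m + k) := by
    intro n hn
    rcases le_or_gt m n with h | h
    · exact ⟨n - m, by simp; omega⟩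
    · simp only [Function.mem_support] at hn
      exact absurd (by simp [hg, Nat.not_le.mpr h]) hn
  rw [← hinj.tsum_eq hzero]
  simp only [hg, Nat.le_add_right, if_true]
  have hs := tele_hasSum hp m hm
  have hnn : ∀ k : ℕ, 0 ≤ ((m + k : ℕ) : ℝ) ^ (-p) - (((m + k : ℕ) : ℝ) + 1) ^ (-p) := by
    intro k
    have h0 : (0:ℝ) < ((m + k : ℕ) : ℝ) := by
      have : 1 ≤ m + k := le_add_right hm
      exact_mod_cast Nat.lt_of_lt_of_le Nat.zero_lt_one this
    have := Real.rpow_le_rpow_of_nonpos h0 (by linarith : ((m + k : ℕ):ℝ) ≤ ((m + k : ℕ):ℝ) + 1)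
      (by linarith : -p ≤ 0)
    linarith
  rw [← ENNReal.ofReal_tsum_of_nonneg hnn hs.summable, hs.tsum_eq]


/-- sup of coordinate absolute values -/
def mz {d : ℕ} (x : Fin d → ℤ) : ℕ := Finset.univ.sup fun i => (x i).natAbs

lemma count_box (d n : ℕ) (C : ℝ≥0∞) :
    (∑' x : Fin d → ℤ, (if mz x ≤ n then C else 0)) = ((2 * n + 1) ^ d : ℕ) * C := by
  classical
  set s : Finset (Fin d → ℤ) := Fintype.piFinset fun _ => Finset.Icc (-(n:ℤ)) (n:ℤ) with hs
  have hmem : ∀ x : Fin d → ℤ, x ∈ s ↔ mz x ≤ n := by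
    intro x
    rw [hs, Fintype.mem_piFinset]
    unfold mz
    rw [Finset.sup_le_iff]
    constructor
    · intro h i _
      have := h i
      rw [Finset.mem_Icc] at this
      omega
    · intro h i
      have := h i (Finset.mem_univ i)
      rw [Finset.mem_Icc]
      omega
  rw [tsum_eq_sum (s := s) (fun x hx => by
    rw [if_neg]; exact fun h => hx ((hmem x).2 h))]
  rw [Finset.sum_congr rfl (fun x hx => if_pos ((hmem x).1 hx))]
  rw [Finset.sum_const, nsmul_eq_mul]
  congr 1
  have hcard : s.card = (2 * n + 1) ^ d := by
    rw [hs, Fintype.card_piFinset]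
    have : (Finset.Icc (-(n:ℤ)) (n:ℤ)).card = 2 * n + 1 := by
      rw [Int.card_Icc]
      omega
    simp [this]
  exact_mod_cast congrArg (Nat.cast : ℕ → ℝ≥0∞) hcard


lemma sum_bound (d : ℕ) (q α : ℝ) (hq : 0 < q) (hαq : α = q + d) (M : ℕ) (hM : 1 ≤ M) :
    (∑' x : Fin d → ℤ, (if M ≤ mz x then ENNReal.ofReal ((mz x : ℝ) ^ (-α)) else 0))
      ≤ ENNReal.ofReal ((3:ℝ)^d * (α/q) * 2^(q+1)) * ENNReal.ofReal ((M:ℝ) ^ (-q)) := by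
  classical
  have hα0 : 0 < α := by
    have : (0:ℝ) ≤ d := Nat.cast_nonneg d
    linarith
  set K1 : ℝ := (3:ℝ)^d * (α/q) * 2^(q+1) with hK1
  have hK1nn : 0 ≤ K1 := by positivity
  set h : (Fin d → ℤ) → ℕ → ℝ≥0∞ := fun x n =>
    if M ≤ mz x ∧ mz x ≤ n then ENNReal.ofReal ((n:ℝ) ^ (-α) - ((n:ℝ) + 1) ^ (-α)) else 0 with hh
  have stepA : ∀ x : Fin d → ℤ,
      (if M ≤ mz x then ENNReal.ofReal ((mz x : ℝ) ^ (-α)) else 0) = ∑' n : ℕ, h x n := by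
    intro x
    by_cases hx : M ≤ mz x
    · rw [if_pos hx, ← tele_tsum hα0 (mz x) (le_trans hM hx)]
      exact tsum_congr fun n => by simp [hh, hx]
    · rw [if_neg hx]
      symm
      simp [hh, hx]
  rw [tsum_congr stepA, ENNReal.tsum_comm]
  have inner : ∀ n : ℕ, (∑' x : Fin d → ℤ, h x n)
      ≤ (if M ≤ n then ENNReal.ofReal (K1 * ((n:ℝ) ^ (-q) - ((n:ℝ) + 1) ^ (-q))) else 0) := by
    intro n
    by_cases hn : M ≤ n
    · rw [if_pos hn]
      set Cn : ℝ≥0∞ := ENNReal.ofReal ((n:ℝ) ^ (-α) - ((n:ℝ) + 1) ^ (-α)) with hCn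
      have h1 : ∀ x : Fin d → ℤ, h x n ≤ (if mz x ≤ n then Cn else 0) := by
        intro x
        by_cases hx : M ≤ mz x ∧ mz x ≤ n
        · rw [hh]; simp only [if_pos hx, if_pos hx.2]; exact le_refl _
        · rw [hh]; simp only [if_neg hx]; exact zero_le
      refine (ENNReal.tsum_le_tsum h1).trans ?_
      rw [count_box d n Cn]
      -- key real inequality
      have hn1 : (1:ℝ) ≤ (n:ℝ) := by exact_mod_cast le_trans hM hn
      have hn0 : (0:ℝ) < (n:ℝ) := lt_of_lt_of_le one_pos hn1
      have hu := rpow_step_upper hα0 hn1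
      have hl := rpow_step_lower hq hn1
      have hDnn : (0:ℝ) ≤ (n:ℝ) ^ (-α) - ((n:ℝ) + 1) ^ (-α) := by
        have := Real.rpow_le_rpow_of_nonpos hn0 (by linarith : (n:ℝ) ≤ (n:ℝ) + 1)
          (by linarith : -α ≤ 0)
        linarith
      have hreal : (((2 * n + 1) ^ d : ℕ) : ℝ) * ((n:ℝ) ^ (-α) - ((n:ℝ) + 1) ^ (-α))
          ≤ K1 * ((n:ℝ) ^ (-q) - ((n:ℝ) + 1) ^ (-q)) := by
        have hpowcast : (((2 * n + 1) ^ d : ℕ) : ℝ) = (2 * (n:ℝ) + 1) ^ d := by push_cast; ring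
        have hpow : (2 * (n:ℝ) + 1) ^ d ≤ (3 * (n:ℝ)) ^ d := by
          apply pow_le_pow_left₀ (by linarith) (by linarith)
        have step1 : (((2 * n + 1) ^ d : ℕ) : ℝ) * ((n:ℝ) ^ (-α) - ((n:ℝ) + 1) ^ (-α))
            ≤ (3 * (n:ℝ)) ^ d * (α * (n:ℝ) ^ (-(α + 1))) := by
          rw [hpowcast]
          apply mul_le_mul hpow hu hDnn (by positivity)
        have hmid : (3 * (n:ℝ)) ^ d * (α * (n:ℝ) ^ (-(α + 1)))
            = (3:ℝ)^d * α * (n:ℝ) ^ (-(q + 1)) := by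
          rw [mul_pow]
          have : ((n:ℝ)) ^ d * (n:ℝ) ^ (-(α + 1)) = (n:ℝ) ^ (-(q + 1)) := by
            rw [← Real.rpow_natCast (n:ℝ) d, ← Real.rpow_add hn0]
            congr 1
            rw [hαq]
            push_cast
            ring
          calc (3:ℝ)^d * (n:ℝ)^d * (α * (n:ℝ) ^ (-(α+1)))
              = (3:ℝ)^d * α * ((n:ℝ)^d * (n:ℝ) ^ (-(α+1))) := by ring
            _ = (3:ℝ)^d * α * (n:ℝ) ^ (-(q + 1)) := by rw [this]
        have step2 : (n:ℝ) ^ (-(q + 1)) ≤ 2 ^ (q+1) * ((n:ℝ) + 1) ^ (-(q + 1)) := by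
          have h2n : ((2:ℝ) * (n:ℝ)) ^ (-(q+1)) ≤ ((n:ℝ) + 1) ^ (-(q+1)) :=
            Real.rpow_le_rpow_of_nonpos (by linarith) (by linarith) (by linarith)
          have hsplit : ((2:ℝ) * (n:ℝ)) ^ (-(q+1)) = (2:ℝ) ^ (-(q+1)) * (n:ℝ) ^ (-(q+1)) :=
            Real.mul_rpow (by norm_num) hn0.le
          have h22 : (2:ℝ) ^ (q+1) * (2:ℝ) ^ (-(q+1)) = 1 := by
            rw [← Real.rpow_add (by norm_num : (0:ℝ) < 2), show q + 1 + -(q+1) = 0 by ring,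
              Real.rpow_zero]
          calc (n:ℝ) ^ (-(q + 1)) = (2:ℝ)^(q+1) * ((2:ℝ) ^ (-(q+1)) * (n:ℝ) ^ (-(q+1))) := by
                rw [← mul_assoc, h22, one_mul]
            _ = (2:ℝ)^(q+1) * ((2:ℝ) * (n:ℝ)) ^ (-(q+1)) := by rw [hsplit]
            _ ≤ (2:ℝ)^(q+1) * ((n:ℝ) + 1) ^ (-(q+1)) := by
                apply mul_le_mul_of_nonneg_left h2n (by positivity)
        have step3 : ((n:ℝ) + 1) ^ (-(q + 1)) ≤ (1/q) * ((n:ℝ) ^ (-q) - ((n:ℝ) + 1) ^ (-q)) := by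
          calc ((n:ℝ) + 1) ^ (-(q + 1)) = (1/q) * (q * ((n:ℝ) + 1) ^ (-(q + 1))) := by
                field_simp
            _ ≤ (1/q) * ((n:ℝ) ^ (-q) - ((n:ℝ) + 1) ^ (-q)) :=
                mul_le_mul_of_nonneg_left hl (by positivity)
        calc (((2 * n + 1) ^ d : ℕ) : ℝ) * ((n:ℝ) ^ (-α) - ((n:ℝ) + 1) ^ (-α))
            ≤ (3:ℝ)^d * α * (n:ℝ) ^ (-(q + 1)) := by rw [← hmid]; exact step1
          _ ≤ (3:ℝ)^d * α * ((2:ℝ)^(q+1) * ((n:ℝ) + 1) ^ (-(q + 1))) := by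
              apply mul_le_mul_of_nonneg_left step2 (by positivity)
          _ ≤ (3:ℝ)^d * α * ((2:ℝ)^(q+1) * ((1/q) * ((n:ℝ) ^ (-q) - ((n:ℝ) + 1) ^ (-q)))) := by
              apply mul_le_mul_of_nonneg_left
                (mul_le_mul_of_nonneg_left step3 (by positivity)) (by positivity)
          _ = K1 * ((n:ℝ) ^ (-q) - ((n:ℝ) + 1) ^ (-q)) := by rw [hK1]; ring
      calc (((2 * n + 1) ^ d : ℕ) : ℝ≥0∞) * Cn
          = ENNReal.ofReal ((((2 * n + 1) ^ d : ℕ) : ℝ) * ((n:ℝ) ^ (-α) - ((n:ℝ) + 1) ^ (-α))) := by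
            rw [hCn, ENNReal.ofReal_mul (by positivity), ENNReal.ofReal_natCast]
        _ ≤ ENNReal.ofReal (K1 * ((n:ℝ) ^ (-q) - ((n:ℝ) + 1) ^ (-q))) :=
            ENNReal.ofReal_le_ofReal hreal
    · rw [if_neg hn]
      have hz : ∀ x : Fin d → ℤ, h x n = 0 := by
        intro x
        rw [hh]
        simp only [ite_eq_right_iff]
        rintro ⟨h1, h2⟩
        exact absurd (le_trans h1 h2) hn
      simp [hz]
  refine (ENNReal.tsum_le_tsum inner).trans ?_
  have pull : ∀ n : ℕ,
      (if M ≤ n then ENNReal.ofReal (K1 * ((n:ℝ) ^ (-q) - ((n:ℝ) + 1) ^ (-q))) else 0)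
        = ENNReal.ofReal K1 * (if M ≤ n then ENNReal.ofReal ((n:ℝ) ^ (-q) - ((n:ℝ) + 1) ^ (-q)) else 0) := by
    intro n
    by_cases hn : M ≤ n
    · rw [if_pos hn, if_pos hn, ENNReal.ofReal_mul hK1nn]
    · rw [if_neg hn, if_neg hn, mul_zero]
  rw [tsum_congr pull, ENNReal.tsum_mul_left, tele_tsum hq M hM]

end Stmt8Aux

open Stmt8Aux

/-- for an i.i.d. Pareto(α) field `ξ` on `ℤ^d` with `α > d`:
for all `A, c > 0` and `ε ∈ (0,1)` there is `R > 0` such that for all `r ≥ 1`,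
with probability at least `1 − ε` every lattice point `x` outside the box
`[−Rr,Rr]^d` satisfies `ξ(x)/r^{d/α} − c|x|/r ≤ −A` (ℓ¹ norm). -/
theorem stmt8 (d : ℕ) (hd : 0 < d) (α : ℝ) (hα : (d : ℝ) < α)
    (Ω : Type*) [MeasurableSpace Ω] (P : Measure Ω) [IsProbabilityMeasure P]
    (ξ : (Fin d → ℤ) → Ω → ℝ)
    (hmeas : ∀ z, Measurable (ξ z))
    (hindep : iIndepFun ξ P)
    (hcdf : ∀ z, ∀ r : ℝ, 1 ≤ r →
      P {ω | ξ z ω ≤ r} = ENNReal.ofReal (1 - r ^ (-α)))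
    (hge1 : ∀ z, ∀ᵐ ω ∂P, 1 ≤ ξ z ω)
    (A c ε : ℝ) (hA : 0 < A) (hc : 0 < c) (hε : 0 < ε) (hε1 : ε < 1) :
    ∃ R : ℝ, 0 < R ∧ ∀ r : ℝ, 1 ≤ r →
      ENNReal.ofReal (1 - ε) ≤
        P {ω | ∀ x : Fin d → ℤ, ¬ (∀ i, |(x i : ℝ)| ≤ R * r) →
          ξ x ω / r ^ ((d : ℝ) / α) - c * (∑ i, |(x i : ℝ)|) / r ≤ -A} := by
  classical
  have hd0 : (0:ℝ) ≤ d := Nat.cast_nonneg d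
  have hα0 : 0 < α := lt_of_le_of_lt hd0 hα
  set q : ℝ := α - d with hqdef
  have hq : 0 < q := sub_pos.mpr hα
  have hαq : α = q + d := by rw [hqdef]; ring
  set K1 : ℝ := (3:ℝ)^d * (α/q) * 2^(q+1) with hK1
  have hK1pos : 0 < K1 := by positivity
  set C0 : ℝ := (2/c)^α * K1 with hC0
  have hC0pos : 0 < C0 := by positivity
  set R : ℝ := max (max 1 ((A+1)/c)) (max (2*A/c) ((C0/ε) ^ (1/q))) with hR
  have hR1 : (1:ℝ) ≤ R := le_trans (le_max_left _ _) (le_max_left _ _)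
  have hR0 : 0 < R := lt_of_lt_of_le one_pos hR1
  have hRA1 : (A+1)/c ≤ R := le_trans (le_max_right _ _) (le_max_left _ _)
  have hRA2 : 2*A/c ≤ R := le_trans (le_max_left _ _) (le_max_right _ _)
  have hRC : (C0/ε) ^ (1/q) ≤ R := le_trans (le_max_right _ _) (le_max_right _ _)
  have hA1R : A + 1 ≤ c * R := by
    rw [div_le_iff₀ hc] at hRA1; linarith
  have h2AR : 2 * A ≤ c * R := by
    rw [div_le_iff₀ hc] at hRA2; linarith
  have hRq : C0 / ε ≤ R ^ q := by
    have h1 : ((C0/ε) ^ (1/q)) ^ q ≤ R ^ q :=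
      Real.rpow_le_rpow (Real.rpow_nonneg (by positivity) _) hRC hq.le
    rwa [← Real.rpow_mul (by positivity), one_div, inv_mul_cancel₀ hq.ne', Real.rpow_one] at h1
  have hfinal : C0 * R ^ (-q) ≤ ε := by
    have hRqpos : 0 < R ^ q := Real.rpow_pos_of_pos hR0 _
    rw [Real.rpow_neg hR0.le]
    rw [div_le_iff₀ hε] at hRq
    rw [← div_eq_mul_inv, div_le_iff₀ hRqpos]
    linarith
  refine ⟨R, hR0, fun r hr => ?_⟩
  have hr0 : (0:ℝ) < r := lt_of_lt_of_le one_pos hr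
  have hRr0 : (0:ℝ) < R * r := mul_pos hR0 hr0
  set M : ℕ := ⌊R * r⌋₊ + 1 with hMdef
  have hMgt : R * r < (M:ℝ) := by
    have := Nat.lt_floor_add_one (R * r)
    push_cast
    exact_mod_cast this
  have hM1 : 1 ≤ M := Nat.le_add_left 1 _
  set rd : ℝ := r ^ ((d:ℝ)/α) with hrd
  have hrd0 : 0 < rd := Real.rpow_pos_of_pos hr0 _
  have hrd1 : 1 ≤ rd := by
    rw [hrd]
    calc (1:ℝ) = r ^ (0:ℝ) := (Real.rpow_zero r).symm
      _ ≤ r ^ ((d:ℝ)/α) := Real.rpow_le_rpow_of_exponent_le hr (by positivity)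
  set S : (Fin d → ℤ) → ℝ := fun x => ∑ i, |(x i : ℝ)| with hS
  set E : Set Ω := {ω | ∀ x : Fin d → ℤ, ¬ (∀ i, |(x i : ℝ)| ≤ R * r) →
          ξ x ω / rd - c * S x / r ≤ -A} with hE
  have hEmeas : MeasurableSet E := by
    have : E = ⋂ x : Fin d → ℤ, {ω | ¬ (∀ i, |(x i : ℝ)| ≤ R * r) →
        ξ x ω / rd - c * S x / r ≤ -A} := by
      rw [hE]; ext ω; simp
    rw [this]
    refine MeasurableSet.iInter fun x => ?_
    by_cases hb : ∀ i, |(x i : ℝ)| ≤ R * r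
    · have : {ω | ¬ (∀ i, |(x i : ℝ)| ≤ R * r) →
          ξ x ω / rd - c * S x / r ≤ -A} = Set.univ := by
        ext ω; simp [hb]
      rw [this]; exact MeasurableSet.univ
    · have : {ω | ¬ (∀ i, |(x i : ℝ)| ≤ R * r) →
          ξ x ω / rd - c * S x / r ≤ -A} = {ω | ξ x ω / rd - c * S x / r ≤ -A} := by
        ext ω; simp [hb]
      rw [this]
      exact measurableSet_le (((hmeas x).div_const rd).sub measurable_const) measurable_const
  set T : (Fin d → ℤ) → Set Ω := fun x =>
    {ω | (¬ (∀ i, |(x i : ℝ)| ≤ R * r)) ∧ ¬ (ξ x ω / rd - c * S x / r ≤ -A)} with hT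
  have hcompl : Eᶜ = ⋃ x : Fin d → ℤ, T x := by
    rw [hE, hT]; ext ω; simp only [Set.mem_compl_iff, Set.mem_setOf_eq, Set.mem_iUnion]
    push_neg
    constructor
    · rintro ⟨x, hx1, hx2⟩; exact ⟨x, hx1, hx2⟩
    · rintro ⟨x, hx1, hx2⟩; exact ⟨x, hx1, hx2⟩
  -- per-x bound
  have perx : ∀ x : Fin d → ℤ, P (T x) ≤ ENNReal.ofReal ((2/c)^α * r^q) *
      (if M ≤ mz x then ENNReal.ofReal ((mz x : ℝ) ^ (-α)) else 0) := by
    intro x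
    by_cases hb : ∀ i, |(x i : ℝ)| ≤ R * r
    · have : T x = ∅ := by
        rw [hT]; ext ω; simp [hb]
      rw [this]; simp
    · -- facts about x
      push_neg at hb
      obtain ⟨i, hi⟩ := hb
      have hcast : ∀ j, ((x j).natAbs : ℝ) = |(x j : ℝ)| := by
        intro j
        rw [Nat.cast_natAbs]
        push_cast
        rfl
      have hmzx : R * r < (mz x : ℝ) := by
        calc R * r < |(x i : ℝ)| := hi
          _ = ((x i).natAbs : ℝ) := (hcast i).symm
          _ ≤ (mz x : ℝ) := Nat.cast_le.mpr
              (Finset.le_sup (f := fun j => (x j).natAbs) (Finset.mem_univ i))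
      have hMmz : M ≤ mz x := by
        rw [hMdef]
        have : ⌊R * r⌋₊ < mz x := (Nat.floor_lt hRr0.le).mpr hmzx
        omega
      have hmz1 : (1:ℝ) ≤ (mz x : ℝ) := by
        have : 1 ≤ mz x := le_trans hM1 hMmz
        exact_mod_cast this
      have hmz0 : (0:ℝ) < (mz x : ℝ) := lt_of_lt_of_le one_pos hmz1
      have hSge : (mz x : ℝ) ≤ S x := by
        obtain ⟨i0, _, hi0⟩ := Finset.exists_mem_eq_sup Finset.univ
          ⟨⟨0, hd⟩, Finset.mem_univ _⟩ (fun i => (x i).natAbs)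
        rw [hS]
        calc (mz x : ℝ) = ((x i0).natAbs : ℝ) := by rw [mz, hi0]
          _ = |(x i0 : ℝ)| := hcast i0
          _ ≤ ∑ j, |(x j : ℝ)| := Finset.single_le_sum
              (f := fun j : Fin d => |(x j : ℝ)|) (fun j _ => abs_nonneg _)
              (Finset.mem_univ i0)
      have hSgt : R * r < S x := lt_of_lt_of_le hmzx hSge
      have hcSR : c * R < c * S x / r := by
        rw [lt_div_iff₀ hr0]
        calc c * R * r = c * (R * r) := by ring
          _ < c * S x := mul_lt_mul_of_pos_left hSgt hc
      set t : ℝ := rd * (c * S x / r - A) with ht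
      have hu1 : 1 ≤ c * S x / r - A := by linarith
      have ht1 : 1 ≤ t := by
        rw [ht]
        calc (1:ℝ) = 1 * 1 := (one_mul 1).symm
          _ ≤ rd * (c * S x / r - A) := mul_le_mul hrd1 hu1 one_pos.le hrd0.le
      have ht0 : 0 < t := lt_of_lt_of_le one_pos ht1
      -- subset
      have hTsub : T x ⊆ {ω | ξ x ω ≤ t}ᶜ := by
        intro ω hω
        rw [hT] at hω
        obtain ⟨_, h2⟩ := hω
        push_neg at h2
        simp only [Set.mem_compl_iff, Set.mem_setOf_eq, not_le]
        have : c * S x / r - A < ξ x ω / rd := by linarith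
        rw [lt_div_iff₀ hrd0] at this
        rw [ht]; linarith [this]
      have hmset : MeasurableSet {ω | ξ x ω ≤ t} := measurableSet_le (hmeas x) measurable_const
      have htle1 : t ^ (-α) ≤ 1 := Real.rpow_le_one_of_one_le_of_nonpos ht1
        (neg_nonpos.mpr hα0.le)
      have htnn : 0 ≤ t ^ (-α) := Real.rpow_nonneg ht0.le _
      have hPT : P (T x) ≤ ENNReal.ofReal (t ^ (-α)) := by
        calc P (T x) ≤ P ({ω | ξ x ω ≤ t}ᶜ) := measure_mono hTsub
          _ = 1 - P {ω | ξ x ω ≤ t} := prob_compl_eq_one_sub hmset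
          _ = 1 - ENNReal.ofReal (1 - t ^ (-α)) := by rw [hcdf x t ht1]
          _ = ENNReal.ofReal (t ^ (-α)) := by
              rw [← ENNReal.ofReal_one, ← ENNReal.ofReal_sub 1 (by linarith)]
              norm_num
      -- bound t^(-α)
      set t0 : ℝ := rd * (c/(2*r)) * (mz x : ℝ) with ht0def
      have ht00 : 0 < t0 := by positivity
      have ht0t : t0 ≤ t := by
        rw [ht0def, ht]
        have hAle : A ≤ c * S x / (2*r) := by
          have : c * S x / (2*r) = (c * S x / r) / 2 := by ring
          rw [this]; linarith
        have h1 : c/(2*r) * (mz x : ℝ) ≤ c * S x / r - A := by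
          calc c/(2*r) * (mz x : ℝ) ≤ c/(2*r) * S x := by
                apply mul_le_mul_of_nonneg_left hSge (by positivity)
            _ = c * S x / (2*r) := by ring
            _ ≤ c * S x / r - A := by
              have : c * S x / r = 2 * (c * S x / (2*r)) := by field_simp
              linarith [this]
        calc rd * (c/(2*r)) * (mz x : ℝ) = rd * (c/(2*r) * (mz x : ℝ)) := by ring
          _ ≤ rd * (c * S x / r - A) := mul_le_mul_of_nonneg_left h1 hrd0.le
      have htb : t ^ (-α) ≤ (2/c)^α * r^q * (mz x : ℝ) ^ (-α) := by
        have h1 : t ^ (-α) ≤ t0 ^ (-α) :=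
          Real.rpow_le_rpow_of_nonpos ht00 ht0t (neg_nonpos.mpr hα0.le)
        have h2 : t0 ^ (-α) = rd ^ (-α) * (c/(2*r)) ^ (-α) * ((mz x : ℝ)) ^ (-α) := by
          rw [ht0def, Real.mul_rpow (by positivity) hmz0.le,
            Real.mul_rpow hrd0.le (by positivity)]
        have h3 : rd ^ (-α) = r ^ (-(d:ℝ)) := by
          rw [hrd, ← Real.rpow_mul hr0.le, show (d:ℝ)/α * -α = -(d:ℝ) by field_simp]
        have h4 : (c/(2*r)) ^ (-α) = (2/c)^α * r^α := by
          rw [Real.rpow_neg (by positivity), ← Real.inv_rpow (by positivity), inv_div]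
          rw [show 2*r/c = (2/c)*r by ring, Real.mul_rpow (by positivity) hr0.le]
        have h5 : r ^ (-(d:ℝ)) * ((2/c)^α * r^α) = (2/c)^α * r^q := by
          rw [show r ^ (-(d:ℝ)) * ((2/c)^α * r^α) = (2/c)^α * (r^(-(d:ℝ)) * r^α) by ring,
            ← Real.rpow_add hr0]
          congr 2
          rw [hqdef]; ring
        calc t ^ (-α) ≤ t0 ^ (-α) := h1
          _ = rd ^ (-α) * (c/(2*r)) ^ (-α) * ((mz x : ℝ)) ^ (-α) := h2
          _ = (2/c)^α * r^q * (mz x : ℝ) ^ (-α) := by rw [h3, h4, ← h5]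
      rw [if_pos hMmz, ← ENNReal.ofReal_mul (by positivity)]
      exact hPT.trans (ENNReal.ofReal_le_ofReal htb)
  -- assemble
  have hPEc : P Eᶜ ≤ ENNReal.ofReal ε := by
    calc P Eᶜ = P (⋃ x : Fin d → ℤ, T x) := by rw [hcompl]
      _ ≤ ∑' x : Fin d → ℤ, P (T x) := measure_iUnion_le T
      _ ≤ ∑' x : Fin d → ℤ, ENNReal.ofReal ((2/c)^α * r^q) *
            (if M ≤ mz x then ENNReal.ofReal ((mz x : ℝ) ^ (-α)) else 0) :=
          ENNReal.tsum_le_tsum perx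
      _ = ENNReal.ofReal ((2/c)^α * r^q) *
            ∑' x : Fin d → ℤ, (if M ≤ mz x then ENNReal.ofReal ((mz x : ℝ) ^ (-α)) else 0) :=
          ENNReal.tsum_mul_left
      _ ≤ ENNReal.ofReal ((2/c)^α * r^q) *
            (ENNReal.ofReal K1 * ENNReal.ofReal ((M:ℝ) ^ (-q))) := by
          exact mul_le_mul_right (sum_bound d q α hq hαq M hM1) _
      _ = ENNReal.ofReal ((2/c)^α * r^q * (K1 * (M:ℝ) ^ (-q))) := by
          rw [← ENNReal.ofReal_mul (show (0:ℝ) ≤ K1 from hK1pos.le),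
            ← ENNReal.ofReal_mul (show (0:ℝ) ≤ (2/c)^α * r^q by positivity)]
      _ ≤ ENNReal.ofReal ε := by
          apply ENNReal.ofReal_le_ofReal
          have hMb : (M:ℝ) ^ (-q) ≤ (R*r) ^ (-q) :=
            Real.rpow_le_rpow_of_nonpos hRr0 hMgt.le (neg_nonpos.mpr hq.le)
          have hsplit : (R*r) ^ (-q) = R ^ (-q) * r ^ (-q) :=
            Real.mul_rpow hR0.le hr0.le
          have hrr : r^q * r^(-q) = 1 := by
            rw [← Real.rpow_add hr0]; norm_num
          calc (2/c)^α * r^q * (K1 * (M:ℝ) ^ (-q))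
              ≤ (2/c)^α * r^q * (K1 * (R ^ (-q) * r ^ (-q))) := by
                apply mul_le_mul_of_nonneg_left _ (by positivity)
                apply mul_le_mul_of_nonneg_left _ hK1pos.le
                rw [← hsplit]; exact hMb
            _ = C0 * R ^ (-q) * (r^q * r^(-q)) := by rw [hC0]; ring
            _ = C0 * R ^ (-q) := by rw [hrr, mul_one]
            _ ≤ ε := hfinal
  have h1 : (1:ℝ≥0∞) ≤ P E + ENNReal.ofReal ε :=
    le_trans (le_of_eq (prob_add_prob_compl hEmeas).symm) (add_le_add_right hPEc _)
  calc ENNReal.ofReal (1 - ε) = 1 - ENNReal.ofReal ε := by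
        rw [ENNReal.ofReal_sub 1 hε.le, ENNReal.ofReal_one]
    _ ≤ P E := tsub_le_iff_right.mpr h1
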